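/- Let M = ⟨C_M, (G̃^(1),...,G̃^(γ))⟩ be a matrix zonotope in R^{n×k} and let Z = ⟨c_Z, (g^(1),...,g^(δ))⟩ be a zonotope in R^k. Then the set {Xz : X ∈ M, z ∈ Z} is contained in the zonotope with center C_M c_Z and generators consisting of: C_M g^(j) for each j, G̃^(i) c_Z for each i, and G̃^(i) g^(j) for each pair (i,j). -/

import Mathlib

open Matrix BigOperators

def zono {V : Type*} [AddCommGroup V] [Module ℝ V] {ι : Type*} [Fintype ι]
    (c : V) (g : ι → V) : Set V :=
  {x | ∃ β : ι → ℝ, (∀ i, |β i| ≤ 1) ∧ x = c + ∑ i, β i • g i}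

lemma sum_mulVec' {n k : ℕ} {ι : Type*} (s : Finset ι)
    (A : ι → Matrix (Fin n) (Fin k) ℝ) (v : Fin k → ℝ) :
    (∑ i ∈ s, A i).mulVec v = ∑ i ∈ s, (A i).mulVec v := by
  classical
  induction s using Finset.induction with
  | empty => simp [Matrix.mulVec]
  | insert _ _ h ih => simp [Finset.sum_insert h, Matrix.add_mulVec, ih]

lemma mulVec_sum' {n k : ℕ} {ι : Type*} (s : Finset ι)
    (A : Matrix (Fin n) (Fin k) ℝ) (v : ι → Fin k → ℝ) :
    A.mulVec (∑ i ∈ s, v i) = ∑ i ∈ s, A.mulVec (v i) := by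
  classical
  induction s using Finset.induction with
  | empty => simp [Matrix.mulVec]
  | insert _ _ h ih => simp [Finset.sum_insert h, Matrix.mulVec_add, ih]

/-- The product of a matrix zonotope and a zonotope is over-approximated by the zonotope
with center `C_M c_Z` and generators `C_M gʲ`, `G̃ⁱ c_Z`, and `G̃ⁱ gʲ`. -/
theorem matrix_zonotope_mul_zonotope_subset {n k γ δ : ℕ}
    (CM : Matrix (Fin n) (Fin k) ℝ) (GM : Fin γ → Matrix (Fin n) (Fin k) ℝ)
    (cZ : Fin k → ℝ) (gZ : Fin δ → Fin k → ℝ) :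
    {y : Fin n → ℝ | ∃ X ∈ zono CM GM, ∃ z ∈ zono cZ gZ, y = X.mulVec z} ⊆
      zono (CM.mulVec cZ)
        (Sum.elim (fun j : Fin δ => CM.mulVec (gZ j))
          (Sum.elim (fun i : Fin γ => (GM i).mulVec cZ)
            (fun p : Fin γ × Fin δ => (GM p.1).mulVec (gZ p.2)))) := by
  rintro y ⟨X, ⟨β, hβ, rfl⟩, z, ⟨α, hα, rfl⟩, rfl⟩
  refine ⟨Sum.elim α (Sum.elim β (fun p => β p.1 * α p.2)), ?_, ?_⟩
  · rintro (j | i | p)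
    · exact hα j
    · exact hβ i
    · simpa [abs_mul] using
        mul_le_one₀ (hβ p.1) (abs_nonneg _) (hα p.2)
  · have expand : (CM + ∑ i, β i • GM i).mulVec (cZ + ∑ j, α j • gZ j) =
        CM.mulVec cZ + ((∑ j, α j • CM.mulVec (gZ j)) +
          ((∑ i, β i • (GM i).mulVec cZ) +
            ∑ p : Fin γ × Fin δ, (β p.1 * α p.2) • (GM p.1).mulVec (gZ p.2))) := by
      simp only [Matrix.add_mulVec, sum_mulVec', Matrix.mulVec_add]
      simp only [mulVec_sum', Matrix.mulVec_smul, Matrix.smul_mulVec,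
        Finset.smul_sum, smul_smul, ← Fintype.sum_prod_type]
      rw [Fintype.sum_prod_type]; abel
    rw [expand]
    rw [Fintype.sum_sum_type, Fintype.sum_sum_type]
    simp
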